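/- Let p₁ ~ Beta(a₁,b₁) and p₂ ~ Beta(a₂,b₂) be independent with positive integer parameters. Then P(p₂ > p₁) equals a finite sum over the joint probability that in a Pólya urn representation the appropriate ordering occurs; in particular for uniform priors updated by (r₁ successes, s₁ failures) and (r₂ successes, s₂ failures), P(p̃₂ > p̃₁ | data) = [Σ_{α=0}^{r₂} C(r₁+r₂−α, r₁)·C(s₁+s₂+1+α, s₁)] / C(n₁+n₂+2, n₁+1), where nᵢ = rᵢ + sᵢ. -/

import Mathlib

open intervalIntegral Finset Nat

namespace Thom

noncomputable def G (r₁ s₁ : ℕ) (x : ℝ) : ℝ := ∫ y in (0:ℝ)..x, y ^ r₁ * (1 - y) ^ s₁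

lemma contg (r₁ s₁ : ℕ) : Continuous (fun y : ℝ => y ^ r₁ * (1 - y) ^ s₁) := by fun_prop

lemma G_hasDerivAt (r₁ s₁ : ℕ) (x : ℝ) :
    HasDerivAt (G r₁ s₁) (x ^ r₁ * (1 - x) ^ s₁) x :=
  ((contg r₁ s₁).integral_hasStrictDerivAt 0 x).hasDerivAt

lemma contG (r₁ s₁ : ℕ) : Continuous (G r₁ s₁) :=
  continuous_iff_continuousAt.2 fun x => (G_hasDerivAt r₁ s₁ x).continuousAt

lemma G_zero (r₁ s₁ : ℕ) : G r₁ s₁ 0 = 0 := integral_same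

lemma onesub_hasDerivAt (n : ℕ) (x : ℝ) :
    HasDerivAt (fun x : ℝ => (1 - x) ^ (n + 1)) (-((n + 1 : ℝ) * (1 - x) ^ n)) x := by
  have h := ((hasDerivAt_pow (n + 1) (1 - x)).comp x
    ((hasDerivAt_const x (1:ℝ)).sub (hasDerivAt_id x)))
  refine h.congr_deriv ?_
  push_cast; ring

lemma loop (F f : ℝ → ℝ) (hderiv : ∀ x, HasDerivAt F (f x) x) (hf : Continuous f)
    (h0 : F 1 = F 0) : ∫ x in (0:ℝ)..1, f x = 0 := by
  rw [integral_eq_sub_of_hasDerivAt (fun x _ => hderiv x) (hf.intervalIntegrable 0 1), h0,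
    sub_self]

/-- IBP without G : (m+1) ∫ x^m (1-x)^(n+1) = (n+1) ∫ x^(m+1) (1-x)^n -/
lemma ibp0 (m n : ℕ) :
    (m + 1 : ℝ) * ∫ x in (0:ℝ)..1, x ^ m * (1 - x) ^ (n + 1)
      = (n + 1 : ℝ) * ∫ x in (0:ℝ)..1, x ^ (m + 1) * (1 - x) ^ n := by
  have hloop : ∫ x in (0:ℝ)..1,
      ((m + 1 : ℝ) * (x ^ m * (1 - x) ^ (n + 1)) - (n + 1 : ℝ) * (x ^ (m + 1) * (1 - x) ^ n)) = 0 := by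
    apply loop (fun x => x ^ (m + 1) * (1 - x) ^ (n + 1))
    · intro x
      have h := (hasDerivAt_pow (m + 1) x).mul (onesub_hasDerivAt n x)
      refine h.congr_deriv ?_
      push_cast; ring
    · fun_prop
    · norm_num
  rw [integral_sub, integral_const_mul, integral_const_mul] at hloop
  · linarith
  · exact (by fun_prop : Continuous fun x : ℝ => (m + 1 : ℝ) * (x ^ m * (1 - x) ^ (n + 1))).intervalIntegrable 0 1
  · exact (by fun_prop : Continuous fun x : ℝ => (n + 1 : ℝ) * (x ^ (m + 1) * (1 - x) ^ n)).intervalIntegrable 0 1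

lemma betaInt (n m : ℕ) : ∫ x in (0:ℝ)..1, x ^ m * (1 - x) ^ n
    = (m.factorial * n.factorial : ℝ) / (m + n + 1).factorial := by
  induction n generalizing m with
  | zero =>
    simp only [pow_zero, mul_one, integral_pow]
    rw [Nat.factorial_succ]
    push_cast
    rw [one_pow]
    have : (m.factorial : ℝ) ≠ 0 := Nat.cast_ne_zero.mpr (Nat.factorial_ne_zero m)
    field_simp
    simp
  | succ n ih =>
    have h := ibp0 m n
    rw [ih (m + 1)] at h
    have hm : (m + 1 : ℝ) ≠ 0 := by positivity
    field_simp at h ⊢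
    rw [show m + (n + 1) + 1 = (m + 1) + n + 1 from by omega]
    rw [Nat.factorial_succ m, Nat.factorial_succ n] at *
    push_cast at h ⊢
    nlinarith [h]

/-- IBP with G, lowering the x power. -/
lemma ibpG (r₁ s₁ m n : ℕ) :
    (n + 1 : ℝ) * ∫ x in (0:ℝ)..1, x ^ (m + 1) * (1 - x) ^ n * G r₁ s₁ x
      = (m + 1 : ℝ) * (∫ x in (0:ℝ)..1, x ^ m * (1 - x) ^ (n + 1) * G r₁ s₁ x)
        + ∫ x in (0:ℝ)..1, x ^ (r₁ + m + 1) * (1 - x) ^ (s₁ + n + 1) := by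
  have hloop : ∫ x in (0:ℝ)..1,
      ((m + 1 : ℝ) * (x ^ m * (1 - x) ^ (n + 1) * G r₁ s₁ x)
        - (n + 1 : ℝ) * (x ^ (m + 1) * (1 - x) ^ n * G r₁ s₁ x)
        + x ^ (r₁ + m + 1) * (1 - x) ^ (s₁ + n + 1)) = 0 := by
    apply loop (fun x => x ^ (m + 1) * (1 - x) ^ (n + 1) * G r₁ s₁ x)
    · intro x
      have h := ((hasDerivAt_pow (m + 1) x).mul (onesub_hasDerivAt n x)).mul
        (G_hasDerivAt r₁ s₁ x)
      refine h.congr_deriv ?_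
      simp only [Pi.mul_apply]
      push_cast; ring
    · have := contG r₁ s₁; fun_prop
    · simp [G_zero]
  rw [integral_add, integral_sub, integral_const_mul, integral_const_mul] at hloop
  · linarith
  · exact (by have := contG r₁ s₁; fun_prop :
      Continuous fun x : ℝ => (m + 1 : ℝ) * (x ^ m * (1 - x) ^ (n + 1) * G r₁ s₁ x)).intervalIntegrable 0 1
  · exact (by have := contG r₁ s₁; fun_prop :
      Continuous fun x : ℝ => (n + 1 : ℝ) * (x ^ (m + 1) * (1 - x) ^ n * G r₁ s₁ x)).intervalIntegrable 0 1
  · exact ((by have := contG r₁ s₁; fun_prop :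
      Continuous fun x : ℝ => (m + 1 : ℝ) * (x ^ m * (1 - x) ^ (n + 1) * G r₁ s₁ x)).sub
      (by have := contG r₁ s₁; fun_prop :
      Continuous fun x : ℝ => (n + 1 : ℝ) * (x ^ (m + 1) * (1 - x) ^ n * G r₁ s₁ x))).intervalIntegrable 0 1
  · exact (by fun_prop :
      Continuous fun x : ℝ => x ^ (r₁ + m + 1) * (1 - x) ^ (s₁ + n + 1)).intervalIntegrable 0 1

/-- IBP base case : m = 0. -/
lemma ibpG0 (r₁ s₁ n : ℕ) :
    (n + 1 : ℝ) * ∫ x in (0:ℝ)..1, (1 - x) ^ n * G r₁ s₁ x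
      = ∫ x in (0:ℝ)..1, x ^ r₁ * (1 - x) ^ (s₁ + n + 1) := by
  have hloop : ∫ x in (0:ℝ)..1,
      (x ^ r₁ * (1 - x) ^ (s₁ + n + 1) - (n + 1 : ℝ) * ((1 - x) ^ n * G r₁ s₁ x)) = 0 := by
    apply loop (fun x => (1 - x) ^ (n + 1) * G r₁ s₁ x)
    · intro x
      have h := (onesub_hasDerivAt n x).mul (G_hasDerivAt r₁ s₁ x)
      refine h.congr_deriv ?_
      ring
    · have := contG r₁ s₁; fun_prop
    · simp [G_zero]
  rw [integral_sub, integral_const_mul] at hloop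
  · linarith
  · exact (by fun_prop :
      Continuous fun x : ℝ => x ^ r₁ * (1 - x) ^ (s₁ + n + 1)).intervalIntegrable 0 1
  · exact (by have := contG r₁ s₁; fun_prop :
      Continuous fun x : ℝ => (n + 1 : ℝ) * ((1 - x) ^ n * G r₁ s₁ x)).intervalIntegrable 0 1

lemma chooseR (a b : ℕ) : (((a + b).choose b : ℕ) : ℝ)
    = ((a + b).factorial : ℝ) / ((a.factorial : ℝ) * (b.factorial : ℝ)) := by
  rw [eq_div_iff (by positivity)]
  push_cast [← Nat.add_choose_mul_factorial_mul_factorial a b]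
  ring

lemma main (r₁ s₁ r₂ s₂ : ℕ) :
    ((r₂ + s₂ + 1).factorial / ((r₂.factorial : ℝ) * s₂.factorial)
        * ((r₁ + s₁ + 1).factorial / ((r₁.factorial : ℝ) * s₁.factorial)))
      * ∫ x in (0:ℝ)..1, x ^ r₂ * (1 - x) ^ s₂ * G r₁ s₁ x
    = (∑ α ∈ Finset.range (r₂ + 1),
          (((r₁ + r₂ - α).choose r₁ : ℝ) * ((s₁ + s₂ + 1 + α).choose s₁ : ℝ)))
        / (((r₁ + s₁) + (r₂ + s₂) + 2).choose ((r₁ + s₁) + 1) : ℝ) := by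
  induction r₂ generalizing s₂ with
  | zero =>
    have hI := ibpG0 r₁ s₁ s₂
    rw [betaInt (s₁ + s₂ + 1) r₁] at hI
    simp only [pow_zero, one_mul] at *
    set J : ℝ := ∫ x in (0:ℝ)..1, (1 - x) ^ s₂ * G r₁ s₁ x with hJdef
    rw [Finset.sum_range_one]
    simp only [Nat.add_zero, Nat.zero_add, Nat.sub_zero, Nat.choose_self, Nat.cast_one, one_mul,
      Nat.factorial_zero, Nat.cast_one]
    rw [show s₁ + s₂ + 1 = (s₂ + 1) + s₁ from by omega,
        show (r₁ + s₁) + s₂ + 2 = (s₂ + 1) + (r₁ + s₁ + 1) from by omega,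
        chooseR, chooseR]
    rw [show s₁ + s₂ + 1 = (s₂ + 1) + s₁ from by omega,
        show r₁ + ((s₂ + 1) + s₁) + 1 = (s₂ + 1) + (r₁ + s₁ + 1) from by omega] at hI
    have h1 : ((s₂ + 1).factorial : ℝ) = (s₂ + 1) * s₂.factorial := by
      rw [Nat.factorial_succ]; push_cast; ring
    have hs : (s₂ + 1 : ℝ) ≠ 0 := by positivity
    have hJ : J = (r₁.factorial * ((s₂+1) + s₁).factorial : ℝ)
        / (((s₂+1) + (r₁ + s₁ + 1)).factorial * (s₂ + 1)) := by
      rw [eq_div_iff (by positivity)]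
      rw [eq_div_iff (by positivity)] at hI
      rw [← hI]; ring
    rw [hJ, h1]
    have f1 := Nat.factorial_ne_zero r₁
    have f2 := Nat.factorial_ne_zero s₁
    have f3 := Nat.factorial_ne_zero s₂
    have f4 := Nat.factorial_ne_zero ((s₂+1) + s₁)
    have f5 := Nat.factorial_ne_zero ((s₂+1) + (r₁ + s₁ + 1))
    have f6 := Nat.factorial_ne_zero (r₁ + s₁ + 1)
    field_simp
  | succ r₂ IH =>
    have hJ := ibpG r₁ s₁ r₂ s₂
    rw [betaInt (s₁ + s₂ + 1) (r₁ + r₂ + 1)] at hJ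
    have IH' := IH (s₂ + 1)
    set J' : ℝ := ∫ x in (0:ℝ)..1, x ^ r₂ * (1 - x) ^ (s₂ + 1) * G r₁ s₁ x with hJ'def
    set Jp : ℝ := ∫ x in (0:ℝ)..1, x ^ (r₂ + 1) * (1 - x) ^ s₂ * G r₁ s₁ x with hJpdef
    -- reindex the sum
    rw [Finset.sum_range_succ']
    have hterm : ∀ α ∈ Finset.range (r₂ + 1),
        (((r₁ + (r₂ + 1) - (α + 1)).choose r₁ : ℝ) * ((s₁ + s₂ + 1 + (α + 1)).choose s₁ : ℝ))
          = (((r₁ + r₂ - α).choose r₁ : ℝ) * ((s₁ + (s₂ + 1) + 1 + α).choose s₁ : ℝ)) := by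
      intro α _
      rw [show r₁ + (r₂ + 1) - (α + 1) = r₁ + r₂ - α from by omega,
          show s₁ + s₂ + 1 + (α + 1) = s₁ + (s₂ + 1) + 1 + α from by omega]
    rw [Finset.sum_congr rfl hterm]
    rw [show (r₁ + s₁) + ((r₂ + 1) + s₂) + 2 = (r₁ + s₁) + (r₂ + (s₂ + 1)) + 2 from by omega]
    set D : ℝ := (((r₁ + s₁) + (r₂ + (s₂ + 1)) + 2).choose ((r₁ + s₁) + 1) : ℝ) with hD
    have hDpos : 0 < D := by
      rw [hD]
      exact_mod_cast Nat.choose_pos (by omega)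
    rw [eq_div_iff (ne_of_gt hDpos)] at IH'
    rw [← IH']
    simp only [Nat.sub_zero, Nat.add_zero]
    rw [show r₁ + (r₂ + 1) = (r₂ + 1) + r₁ from by omega,
        show s₁ + s₂ + 1 = (s₂ + 1) + s₁ from by omega, chooseR, chooseR]
    rw [hD, show (r₁ + s₁) + (r₂ + (s₂ + 1)) + 2 = (r₂ + s₂ + 2) + (r₁ + s₁ + 1) from by omega,
        chooseR]
    rw [show (r₂ + 1) + s₂ + 1 = r₂ + s₂ + 2 from by omega,
        show r₂ + (s₂ + 1) + 1 = r₂ + s₂ + 2 from by omega,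
        show (r₂ + 1) + r₁ = r₁ + r₂ + 1 from by omega,
        show (s₂ + 1) + s₁ = s₁ + s₂ + 1 from by omega,
        show (r₂ + s₂ + 2) + (r₁ + s₁ + 1) = (r₁ + r₂ + 1) + (s₁ + s₂ + 1) + 1 from by omega]
    have hs : (s₂ + 1 : ℝ) ≠ 0 := by positivity
    have hJp : Jp = ((r₂ + 1 : ℝ) * J'
        + ((r₁ + r₂ + 1).factorial * (s₁ + s₂ + 1).factorial : ℝ)
          / ((r₁ + r₂ + 1) + (s₁ + s₂ + 1) + 1).factorial) / (s₂ + 1 : ℝ) := by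
      rw [eq_div_iff hs, mul_comm]
      linarith [hJ]
    rw [hJp, Nat.factorial_succ r₂, Nat.factorial_succ s₂]
    push_cast
    have f1 := Nat.factorial_ne_zero r₁
    have f2 := Nat.factorial_ne_zero s₁
    have f3 := Nat.factorial_ne_zero s₂
    have f4 := Nat.factorial_ne_zero r₂
    have f5 := Nat.factorial_ne_zero (r₂ + s₂ + 2)
    have f6 := Nat.factorial_ne_zero (r₁ + r₂ + 1)
    have f7 := Nat.factorial_ne_zero (s₁ + s₂ + 1)
    have f8 := Nat.factorial_ne_zero ((r₁ + r₂ + 1) + (s₁ + s₂ + 1) + 1)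
    have f9 := Nat.factorial_ne_zero (r₁ + s₁ + 1)
    field_simp

end Thom

/-- Thompson's (1933) exact formula: with independent posteriors
p̃ᵢ ~ Beta(rᵢ+1, sᵢ+1) (uniform priors updated by rᵢ successes, sᵢ failures),
P(p̃₂ > p̃₁) = [Σ_{α=0}^{r₂} C(r₁+r₂-α,r₁)·C(s₁+s₂+1+α,s₁)] / C(n₁+n₂+2, n₁+1). -/
theorem stmt6 (r₁ s₁ r₂ s₂ : ℕ) :
    (∫ x in (0:ℝ)..1,
        ((((r₂ + s₂ + 1).factorial : ℝ) / ((r₂.factorial : ℝ) * (s₂.factorial : ℝ)))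
            * x ^ r₂ * (1 - x) ^ s₂) *
        ∫ y in (0:ℝ)..x,
          ((((r₁ + s₁ + 1).factorial : ℝ) / ((r₁.factorial : ℝ) * (s₁.factorial : ℝ)))
            * y ^ r₁ * (1 - y) ^ s₁)
      = (∑ α ∈ Finset.range (r₂ + 1),
          (((r₁ + r₂ - α).choose r₁ : ℝ) * ((s₁ + s₂ + 1 + α).choose s₁ : ℝ)))
        / (((r₁ + s₁) + (r₂ + s₂) + 2).choose ((r₁ + s₁) + 1) : ℝ)) := by
  have key := Thom.main r₁ s₁ r₂ s₂
  have inner : ∀ x : ℝ,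
      (∫ y in (0:ℝ)..x,
        ((((r₁ + s₁ + 1).factorial : ℝ) / ((r₁.factorial : ℝ) * (s₁.factorial : ℝ)))
            * y ^ r₁ * (1 - y) ^ s₁))
      = (((r₁ + s₁ + 1).factorial : ℝ) / ((r₁.factorial : ℝ) * (s₁.factorial : ℝ)))
          * Thom.G r₁ s₁ x := by
    intro x
    rw [Thom.G, ← intervalIntegral.integral_const_mul]
    simp only [mul_assoc]
  simp only [inner]
  have h2 : ∀ x : ℝ,
      ((((r₂ + s₂ + 1).factorial : ℝ) / ((r₂.factorial : ℝ) * (s₂.factorial : ℝ)))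
          * x ^ r₂ * (1 - x) ^ s₂)
        * ((((r₁ + s₁ + 1).factorial : ℝ) / ((r₁.factorial : ℝ) * (s₁.factorial : ℝ)))
          * Thom.G r₁ s₁ x)
      = ((((r₂ + s₂ + 1).factorial : ℝ) / ((r₂.factorial : ℝ) * (s₂.factorial : ℝ)))
          * ((((r₁ + s₁ + 1).factorial : ℝ) / ((r₁.factorial : ℝ) * (s₁.factorial : ℝ)))))
        * (x ^ r₂ * (1 - x) ^ s₂ * Thom.G r₁ s₁ x) := fun x => by ring
  simp only [h2]
  rw [intervalIntegral.integral_const_mul]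
  exact key
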